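/- For every integer n ≥ 0 one has (1 − t + t x)·U_n = (1 − t + t² x t⁻¹)·V_n in ℤ[H]; equivalently, W_n = (U_n, V_n) belongs to K = ker f. -/
import Mathlib


open Finsupp Multiplicative

/-- The shift automorphism of the free abelian group `ℤ →₀ ℤ`, sending the basis element
`single n 1` (i.e. `x_n`) to `single (n + 1) 1` (i.e. `x_{n+1}`). -/
noncomputable def shiftAut : Multiplicative (ℤ →₀ ℤ) ≃* Multiplicative (ℤ →₀ ℤ) :=
  AddEquiv.toMultiplicative (Finsupp.domCongr (Equiv.addRight (1 : ℤ)))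

/-- The action of `ℤ` on the free abelian group `ℤ →₀ ℤ` by shifting. -/
noncomputable def shiftHom : Multiplicative ℤ →* MulAut (Multiplicative (ℤ →₀ ℤ)) :=
  zpowersHom _ (shiftAut : MulAut (Multiplicative (ℤ →₀ ℤ)))

/-- The wreath product `H = ℤ ≀ ℤ`: the semidirect product of the free abelian group `N`
with basis `{x_n : n ∈ ℤ}` (multiplicative `ℤ →₀ ℤ`) by an infinite cyclic group `⟨t⟩`,
where conjugation by `t` sends `x_n` to `x_{n+1}`. -/
noncomputable abbrev Hgrp : Type :=
  Multiplicative (ℤ →₀ ℤ) ⋊[shiftHom] Multiplicative ℤ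

/-- The element `x_n = tⁿ x t⁻ⁿ` of `H`. -/
noncomputable def xE (n : ℤ) : Hgrp :=
  SemidirectProduct.inl (Multiplicative.ofAdd (Finsupp.single n 1))

/-- The element `t` of `H`. -/
noncomputable def tE : Hgrp :=
  SemidirectProduct.inr (Multiplicative.ofAdd 1)

/-- The integral group ring `ℤ[H]`. -/
noncomputable abbrev Agr : Type := MonoidAlgebra ℤ Hgrp

/-- The element `x_i ∈ ℤ[H]`. -/
noncomputable def XA (i : ℤ) : Agr := MonoidAlgebra.of ℤ Hgrp (xE i)

/-- The element `t ∈ ℤ[H]`. -/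
noncomputable def TA : Agr := MonoidAlgebra.of ℤ Hgrp tE

/-- `y_i = 1 - x_i`. -/
noncomputable def yA (i : ℤ) : Agr := 1 - XA i

/-- `z_i = x_{i-1} - x_i`. -/
noncomputable def zA (i : ℤ) : Agr := XA (i - 1) - XA i

/-- The product `y₀ y₋₁ ⋯ y_k` (equal to `1` when `k > 0`). -/
noncomputable def yProd (k : ℤ) : Agr :=
  ((List.range (1 - k).toNat).map (fun i => yA (-(i : ℤ)))).prod

/-- `U_n = z_{−n} − t^{n+1} z₁ y₀ y₋₁ ⋯ y₋ₙ`. -/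
noncomputable def UU (n : ℕ) : Agr :=
  zA (-(n : ℤ)) - TA ^ (n + 1) * zA 1 * yProd (-(n : ℤ))

/-- `V_n = z_{−n} + Σ_{i=1}^{n} tⁱ z_{−n} z₁ y₀ y₋₁ ⋯ y_{2−i} − t^{n+1} z₁ y₀ ⋯ y_{1−n} y_{−1−n}`. -/
noncomputable def VV (n : ℕ) : Agr :=
  zA (-(n : ℤ)) + (∑ i ∈ Finset.Icc 1 n, TA ^ i * zA (-(n : ℤ)) * zA 1 * yProd (2 - (i : ℤ)))
    - TA ^ (n + 1) * zA 1 * yProd (1 - (n : ℤ)) * yA (-1 - (n : ℤ))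

/-- `W_n = (U_n, V_n) ∈ ℤ[H] ⊕ ℤ[H]`. -/
noncomputable def WW (n : ℕ) : Agr × Agr := (UU n, VV n)

/-- `1 − t + t x ∈ ℤ[H]`. -/
noncomputable def aElt : Agr := 1 - TA + TA * XA 0

/-- `1 − t + t² x t⁻¹ ∈ ℤ[H]`. -/
noncomputable def bElt : Agr := 1 - TA + MonoidAlgebra.of ℤ Hgrp (tE ^ 2 * xE 0 * tE⁻¹)

/-- The homomorphism of right `ℤ[H]`-modules
`f(U, V) = (1 − t + t x)·U − (1 − t + t² x t⁻¹)·V`;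
right `ℤ[H]`-modules are `ℤ[H]ᵐᵒᵖ`-modules. -/
noncomputable def fMap : (Agr × Agr) →ₗ[Agrᵐᵒᵖ] Agr where
  toFun p := aElt * p.1 - bElt * p.2
  map_add' v w := by
    simp only [Prod.fst_add, Prod.snd_add, mul_add]
    abel
  map_smul' c v := by
    simp only [Prod.smul_fst, Prod.smul_snd, MulOpposite.smul_eq_mul_unop, RingHom.id_apply]
    rw [sub_mul, mul_assoc, mul_assoc]

lemma xE_mul_xE (i j : ℤ) : xE i * xE j = xE j * xE i := by
  unfold xE
  rw [← map_mul SemidirectProduct.inl, ← map_mul SemidirectProduct.inl, mul_comm]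

lemma tE_mul_xE (i : ℤ) : tE * xE i = xE (i + 1) * tE := by
  have h := SemidirectProduct.inl_aut (φ := shiftHom) (ofAdd (1:ℤ)) (ofAdd (Finsupp.single i 1))
  have h2 : shiftHom (ofAdd (1:ℤ)) (ofAdd (Finsupp.single i 1)) = ofAdd (Finsupp.single (i+1) 1) := by
    show (shiftAut ^ ((ofAdd (1:ℤ)).toAdd)) (ofAdd (Finsupp.single i 1)) = _
    simp only [toAdd_ofAdd, zpow_one]
    show ofAdd (Finsupp.equivMapDomain (Equiv.addRight (1:ℤ)) (Finsupp.single i 1)) = _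
    rw [Finsupp.equivMapDomain_single]
    rfl
  rw [h2] at h
  have := congrArg (· * SemidirectProduct.inr (ofAdd (1:ℤ))) h
  simpa [xE, tE, mul_assoc] using this.symm
lemma commute_XA (i j : ℤ) : Commute (XA i) (XA j) := by
  unfold XA Commute SemiconjBy
  rw [← map_mul, ← map_mul, xE_mul_xE]

lemma TA_mul_XA (i : ℤ) : TA * XA i = XA (i + 1) * TA := by
  unfold TA XA
  rw [← map_mul, ← map_mul, tE_mul_xE]

lemma XA_mul_TA (i : ℤ) : XA i * TA = TA * XA (i - 1) := by
  rw [TA_mul_XA]; ring_nf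

lemma XA_mul_TA_pow (i : ℤ) (m : ℕ) : XA i * TA ^ m = TA ^ m * XA (i - m) := by
  induction m generalizing i with
  | zero => simp
  | succ m ih =>
    rw [pow_succ, ← mul_assoc, ih, mul_assoc, XA_mul_TA, ← mul_assoc, ← pow_succ]
    congr 2
    push_cast; ring

lemma yA_mul_TA_pow (i : ℤ) (m : ℕ) : yA i * TA ^ m = TA ^ m * yA (i - m) := by
  simp only [yA, sub_mul, mul_sub, one_mul, mul_one, XA_mul_TA_pow]

lemma zA_mul_TA_pow (i : ℤ) (m : ℕ) : zA i * TA ^ m = TA ^ m * zA (i - m) := by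
  simp only [zA, sub_mul, mul_sub, XA_mul_TA_pow]
  ring_nf

lemma commute_XA_yA (i j : ℤ) : Commute (XA i) (yA j) :=
  ((Commute.one_right _).sub_right (commute_XA i j))

lemma commute_yA_yA (i j : ℤ) : Commute (yA i) (yA j) :=
  Commute.sub_left (Commute.one_left _) (commute_XA_yA i j)

lemma commute_XA_zA (i j : ℤ) : Commute (XA i) (zA j) :=
  ((commute_XA i (j-1)).sub_right (commute_XA i j))

lemma commute_yA_zA (i j : ℤ) : Commute (yA i) (zA j) :=
  Commute.sub_left (Commute.one_left _) (commute_XA_zA i j)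

lemma commute_zA_zA (i j : ℤ) : Commute (zA i) (zA j) :=
  ((commute_XA_zA (i-1) j).sub_left (commute_XA_zA i j))

lemma commute_yA_yProd (i k : ℤ) : Commute (yA i) (yProd k) :=
  Commute.list_prod_right _ _ (by
    intro b hb
    simp only [List.mem_map] at hb
    obtain ⟨a, _, rfl⟩ := hb
    exact commute_yA_yA i _)

lemma commute_zA_yProd (i k : ℤ) : Commute (zA i) (yProd k) :=
  Commute.list_prod_right _ _ (by
    intro b hb
    simp only [List.mem_map] at hb
    obtain ⟨a, _, rfl⟩ := hb
    exact (commute_yA_zA _ i).symm)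

lemma yProd_one : yProd 1 = 1 := by simp [yProd]

lemma yProd_step (k : ℤ) (hk : k ≤ 1) : yProd (k - 1) = yProd k * yA (k - 1) := by
  have h1 : (1 - (k-1)).toNat = (1 - k).toNat + 1 := by omega
  have h2 : -(((1 - k).toNat : ℕ) : ℤ) = k - 1 := by omega
  rw [yProd, h1]
  simp [List.range_succ, h2, yProd]
  congr 2
  omega
lemma yStep (k : ℤ) (hk : k ≤ 0) : yProd k = yProd (k + 1) * yA k := by
  have h1 : (1 - k).toNat = (1 - (k+1)).toNat + 1 := by omega
  rw [yProd, h1]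
  simp [List.range_succ, yProd]
  congr 2
  omega

lemma ypA (i : ℤ) (hi : 1 ≤ i) : yProd (1 - i) = yProd (2 - i) * yA (1 - i) := by
  have := yStep (1 - i) (by omega)
  rwa [show (1:ℤ) - i + 1 = 2 - i from by ring] at this

lemma ypB (n : ℕ) : yProd (-(n:ℤ)) = yProd (1 - (n:ℤ)) * yA (-(n:ℤ)) := by
  have := yStep (-(n:ℤ)) (by omega)
  rwa [show -(n:ℤ) + 1 = 1 - n from by ring] at this

lemma aElt_eq : aElt = 1 - TA * yA 0 := by
  unfold aElt yA; rw [mul_sub, mul_one]; abel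

lemma bElt_eq : bElt = 1 - TA * yA 1 := by
  have h : tE ^ 2 * xE 0 * tE⁻¹ = tE * xE 1 := by
    rw [pow_two, mul_assoc tE tE (xE 0), tE_mul_xE, zero_add, ← mul_assoc,
      mul_assoc (tE * xE 1) tE tE⁻¹, mul_inv_cancel, mul_one]
  unfold bElt yA
  rw [h, map_mul, mul_sub, mul_one]
  show 1 - TA + TA * XA 1 = _
  abel

lemma moveRight2 (y a b : Agr) (h1 : Commute y a) (h2 : Commute y b) :
    y * (a * b) = a * (b * y) := by rw [(h1.mul_right h2).eq, mul_assoc]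

lemma moveRight3 (y a b c : Agr) (h1 : Commute y a) (h2 : Commute y b) (h3 : Commute y c) :
    y * (a * (b * c)) = a * (b * (c * y)) := by
  rw [(h1.mul_right (h2.mul_right h3)).eq, mul_assoc, mul_assoc]

lemma lemF (n i : ℕ) (hi : 1 ≤ i) :
    yA (1 - (i:ℤ)) * (zA (-(n:ℤ)) * (zA 1 * yProd (2 - (i:ℤ))))
      = zA (-(n:ℤ)) * (zA 1 * yProd (1 - (i:ℤ))) := by
  rw [ypA i (by exact_mod_cast hi)]
  rw [moveRight3 _ _ _ _ (commute_yA_zA _ _) (commute_yA_zA _ _) (commute_yA_yProd _ _)]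

lemma lemE (n : ℕ) :
    yA (-1 - (n:ℤ)) * (zA 1 * yProd (-(n:ℤ)))
      = yA (-(n:ℤ)) * (zA 1 * (yProd (1 - (n:ℤ)) * yA (-1 - (n:ℤ)))) := by
  rw [ypB n]
  rw [moveRight3 _ _ _ _ (commute_yA_zA _ _) (commute_yA_yProd _ _) (commute_yA_yA _ _)]
  rw [moveRight3 _ _ _ _ (commute_yA_zA _ _) (commute_yA_yProd _ _) (commute_yA_yA _ _)]
  rw [(commute_yA_yA (-1 - (n:ℤ)) (-(n:ℤ))).eq]

lemma lemD (n : ℕ) :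
    zA 1 * yProd (-(n:ℤ)) - zA 1 * (yProd (1 - (n:ℤ)) * yA (-1 - (n:ℤ)))
      = zA (-(n:ℤ)) * (zA 1 * yProd (1 - (n:ℤ))) := by
  rw [ypB n, ← mul_assoc (zA 1) (yProd (1 - (n:ℤ))), ← mul_assoc (zA 1) (yProd (1 - (n:ℤ))),
    ← mul_sub]
  have hz : yA (-(n:ℤ)) - yA (-1 - (n:ℤ)) = zA (-(n:ℤ)) := by
    rw [yA, yA, zA, show -(n:ℤ) - 1 = -1 - (n:ℤ) from by ring]
    abel
  rw [hz]
  rw [moveRight2 (zA (-(n:ℤ))) (zA 1) (yProd (1 - (n:ℤ))) (commute_zA_zA _ _)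
    (commute_zA_yProd _ _), mul_assoc]

lemma lemA (n : ℕ) : yA 0 * UU n - yA 1 * VV n
    = -(zA (-(n:ℤ)) * zA 1)
      - ∑ i ∈ Finset.Icc 1 n, TA ^ i * (zA (-(n:ℤ)) * (zA 1 * yProd (1 - (i:ℤ)))) := by
  have hC : yA 0 * (TA ^ (n+1) * zA 1 * yProd (-(n:ℤ)))
      = yA 1 * (TA ^ (n+1) * zA 1 * yProd (1 - (n:ℤ)) * yA (-1 - (n:ℤ))) := by
    rw [mul_assoc (TA ^ (n+1)) (zA 1) (yProd (-(n:ℤ))), ← mul_assoc (yA 0),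
      yA_mul_TA_pow, mul_assoc]
    rw [mul_assoc (TA ^ (n+1) * zA 1) (yProd (1 - (n:ℤ))), mul_assoc (TA ^ (n+1)) (zA 1),
      ← mul_assoc (yA 1), yA_mul_TA_pow, mul_assoc]
    congr 1
    · rw [show (0:ℤ) - ((n:ℕ)+1 : ℕ) = -1 - (n:ℤ) from by push_cast; ring,
        show (1:ℤ) - ((n:ℕ)+1 : ℕ) = -(n:ℤ) from by push_cast; ring]
      exact lemE n
  have hS : yA 1 * (∑ i ∈ Finset.Icc 1 n, TA ^ i * zA (-(n:ℤ)) * zA 1 * yProd (2 - (i:ℤ)))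
      = ∑ i ∈ Finset.Icc 1 n, TA ^ i * (zA (-(n:ℤ)) * (zA 1 * yProd (1 - (i:ℤ)))) := by
    rw [Finset.mul_sum]
    refine Finset.sum_congr rfl fun i hi => ?_
    have hi1 : 1 ≤ i := (Finset.mem_Icc.mp hi).1
    simp only [mul_assoc]
    rw [← mul_assoc (yA 1), yA_mul_TA_pow, mul_assoc]
    rw [lemF n i hi1]
  have hZ : yA 0 * zA (-(n:ℤ)) - yA 1 * zA (-(n:ℤ)) = -(zA (-(n:ℤ)) * zA 1) := by
    have h01 : yA 0 - yA 1 = -zA 1 := by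
      rw [yA, yA, zA, show (1:ℤ) - 1 = 0 from by ring]
      abel
    rw [← sub_mul, h01, neg_mul, (commute_zA_zA 1 (-(n:ℤ))).eq]
  rw [UU, VV, mul_sub, mul_sub, mul_add, hC, hS, ← hZ]
  abel

lemma lemB (n : ℕ) : UU n - VV n =
    -(∑ i ∈ Finset.Icc 1 n, TA ^ i * (zA (-(n:ℤ)) * (zA 1 * yProd (2 - (i:ℤ))))
      + TA ^ (n+1) * (zA (-(n:ℤ)) * (zA 1 * yProd (1 - (n:ℤ))))) := by
  have hsum : ∑ i ∈ Finset.Icc 1 n, TA ^ i * zA (-(n:ℤ)) * zA 1 * yProd (2 - (i:ℤ))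
      = ∑ i ∈ Finset.Icc 1 n, TA ^ i * (zA (-(n:ℤ)) * (zA 1 * yProd (2 - (i:ℤ)))) :=
    Finset.sum_congr rfl fun i _ => by rw [mul_assoc, mul_assoc]
  have h2 : TA ^ (n+1) * zA 1 * yProd (-(n:ℤ))
        - TA ^ (n+1) * zA 1 * yProd (1 - (n:ℤ)) * yA (-1 - (n:ℤ))
      = TA ^ (n+1) * (zA (-(n:ℤ)) * (zA 1 * yProd (1 - (n:ℤ)))) := by
    rw [mul_assoc (TA ^ (n+1)) (zA 1) (yProd (-(n:ℤ))),
      mul_assoc (TA ^ (n+1) * zA 1) (yProd (1 - (n:ℤ))), mul_assoc (TA ^ (n+1)) (zA 1),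
      ← mul_sub, lemD n]
  rw [UU, VV, hsum, ← h2]
  abel

lemma lemC (n : ℕ) :
    ∑ i ∈ Finset.Icc 1 n, TA ^ i * (zA (-(n:ℤ)) * (zA 1 * yProd (2 - (i:ℤ))))
        + TA ^ (n+1) * (zA (-(n:ℤ)) * (zA 1 * yProd (1 - (n:ℤ))))
      = TA * (zA (-(n:ℤ)) * zA 1)
        + ∑ i ∈ Finset.Icc 1 n, TA * (TA ^ i * (zA (-(n:ℤ)) * (zA 1 * yProd (1 - (i:ℤ))))) := by
  set g : ℕ → Agr := fun j => TA ^ (1+j) * (zA (-(n:ℤ)) * (zA 1 * yProd (1 - (j:ℤ)))) with hg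
  have hL : ∑ i ∈ Finset.Icc 1 n, TA ^ i * (zA (-(n:ℤ)) * (zA 1 * yProd (2 - (i:ℤ))))
      = ∑ j ∈ Finset.range n, g j := by
    rw [← Finset.Ico_add_one_right_eq_Icc, Finset.sum_Ico_eq_sum_range]
    try simp only [Nat.add_sub_cancel]
    refine Finset.sum_congr rfl fun j _ => ?_
    show TA ^ (1+j) * (zA (-(n:ℤ)) * (zA 1 * yProd (2 - ((1+j:ℕ):ℤ))))
      = TA ^ (1+j) * (zA (-(n:ℤ)) * (zA 1 * yProd (1 - (j:ℤ))))
    rw [show (2:ℤ) - ((1+j:ℕ):ℤ) = 1 - (j:ℤ) from by push_cast; ring]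
  have hR : ∑ i ∈ Finset.Icc 1 n, TA * (TA ^ i * (zA (-(n:ℤ)) * (zA 1 * yProd (1 - (i:ℤ)))))
      = ∑ j ∈ Finset.range n, g (j+1) := by
    rw [← Finset.Ico_add_one_right_eq_Icc, Finset.sum_Ico_eq_sum_range]
    try simp only [Nat.add_sub_cancel]
    refine Finset.sum_congr rfl fun j _ => ?_
    show TA * (TA ^ (1+j) * (zA (-(n:ℤ)) * (zA 1 * yProd (1 - ((1+j:ℕ):ℤ)))))
      = TA ^ (1+(j+1)) * (zA (-(n:ℤ)) * (zA 1 * yProd (1 - ((j+1:ℕ):ℤ))))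
    rw [← mul_assoc, ← pow_succ', show 1+j+1 = 1+(j+1) from by omega,
      show (1:ℤ) - ((1+j:ℕ):ℤ) = 1 - ((j+1:ℕ):ℤ) from by push_cast; ring]
  have hg0 : g 0 = TA * (zA (-(n:ℤ)) * zA 1) := by
    rw [hg]
    simp [yProd_one]
  have hgn : g n = TA ^ (n+1) * (zA (-(n:ℤ)) * (zA 1 * yProd (1 - (n:ℤ)))) := by
    show TA ^ (1+n) * (zA (-(n:ℤ)) * (zA 1 * yProd (1 - (n:ℤ)))) = _
    rw [add_comm 1 n]
  rw [hL, hR, ← hg0, ← hgn, ← Finset.sum_range_succ, Finset.sum_range_succ']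
  exact add_comm _ _

lemma main_id (n : ℕ) : UU n - VV n = TA * (yA 0 * UU n - yA 1 * VV n) := by
  rw [lemA, lemB, mul_sub, mul_neg, Finset.mul_sum, lemC]
  abel

theorem w_mem_ker (n : ℕ) :
    aElt * UU n = bElt * VV n ∧ WW n ∈ LinearMap.ker fMap := by
  have key : aElt * UU n = bElt * VV n := by
    rw [aElt_eq, bElt_eq, sub_mul, sub_mul, one_mul, one_mul, mul_assoc, mul_assoc,
      sub_eq_sub_iff_sub_eq_sub, ← mul_sub]
    exact main_id n
  refine ⟨key, ?_⟩
  rw [LinearMap.mem_ker]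
  show aElt * (WW n).1 - bElt * (WW n).2 = 0
  rw [WW]
  simpa [sub_eq_zero] using key
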